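/- arXiv:2107.08588 — 2 statements merged into one kernel-verified Lean document; each statement's English description precedes it below -/
import Mathlib

section
/- Let H ∈ ℝ^{m×m} be symmetric positive semidefinite and let v, d ∈ ℝ^m. Then v^T H d ≤ (1/2)(v^T d + ‖v‖‖d‖) ‖H‖, where ‖H‖ is the spectral norm of H. -/
open Matrix

noncomputable def vnorm {m : ℕ} (v : Fin m → ℝ) : ℝ := Real.sqrt (v ⬝ᵥ v)

noncomputable def opNorm {m : ℕ} (M : Matrix (Fin m) (Fin m) ℝ) : ℝ :=
  ‖Matrix.toEuclideanCLM (𝕜 := ℝ) M‖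

theorem stmt_11 (m : ℕ) (H : Matrix (Fin m) (Fin m) ℝ) (hH : H.PosSemidef)
    (v d : Fin m → ℝ) :
    v ⬝ᵥ H.mulVec d ≤ (1 / 2) * (v ⬝ᵥ d + vnorm v * vnorm d) * opNorm H := by
  have hA : ∀ x : Fin m → ℝ, 0 ≤ x ⬝ᵥ H.mulVec x := fun x => by
    simpa using hH.re_dotProduct_nonneg x
  have hB : ∀ x : Fin m → ℝ, x ⬝ᵥ H.mulVec x ≤ opNorm H * (x ⬝ᵥ x) := by
    intro x
    have h1 : x ⬝ᵥ H.mulVec x = inner (𝕜 := ℝ)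
        ((WithLp.equiv 2 _).symm x : EuclideanSpace ℝ (Fin m))
        ((Matrix.toEuclideanCLM (𝕜 := ℝ) H) ((WithLp.equiv 2 _).symm x)) := by
      simp only [WithLp.equiv_symm_apply, Matrix.toEuclideanCLM_toLp]
      simp [PiLp.inner_apply, dotProduct, mul_comm]
    have h4 : x ⬝ᵥ x = ‖((WithLp.equiv 2 _).symm x : EuclideanSpace ℝ (Fin m))‖ ^ 2 := by
      rw [← real_inner_self_eq_norm_sq]
      simp only [WithLp.equiv_symm_apply, PiLp.inner_apply, dotProduct, RCLike.inner_apply, conj_trivial]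
    set y : EuclideanSpace ℝ (Fin m) := (WithLp.equiv 2 _).symm x with hy
    rw [h1, h4]
    have h2 : inner (𝕜 := ℝ) y ((Matrix.toEuclideanCLM (𝕜 := ℝ) H) y) ≤
        ‖y‖ * ‖(Matrix.toEuclideanCLM (𝕜 := ℝ) H) y‖ := real_inner_le_norm _ _
    have h3 : ‖(Matrix.toEuclideanCLM (𝕜 := ℝ) H) y‖ ≤ opNorm H * ‖y‖ :=
      (Matrix.toEuclideanCLM (𝕜 := ℝ) H).le_opNorm y
    nlinarith [norm_nonneg y]
  have hc : 0 ≤ opNorm H := norm_nonneg _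
  have hsym : ∀ a b : Fin m → ℝ, a ⬝ᵥ H.mulVec b = b ⬝ᵥ H.mulVec a := by
    intro a b
    have hs : Hᵀ = H := by
      have := hH.isHermitian.eq
      simpa [Matrix.conjTranspose_eq_transpose_of_trivial] using this
    rw [dotProduct_mulVec, ← mulVec_transpose, hs, dotProduct_comm]
  have hnv : 0 ≤ vnorm v := Real.sqrt_nonneg _
  have hnd : 0 ≤ vnorm d := Real.sqrt_nonneg _
  have hvv : v ⬝ᵥ v = vnorm v ^ 2 := by
    rw [vnorm, Real.sq_sqrt]
    exact Finset.sum_nonneg fun i _ => mul_self_nonneg (v i)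
  have hdd : d ⬝ᵥ d = vnorm d ^ 2 := by
    rw [vnorm, Real.sq_sqrt]
    exact Finset.sum_nonneg fun i _ => mul_self_nonneg (d i)
  by_cases hv0 : v = 0
  · subst hv0
    simp [vnorm]
  by_cases hd0 : d = 0
  · subst hd0
    simp [vnorm]
  have hnvpos : 0 < vnorm v := by
    rcases hnv.lt_or_eq with h | h
    · exact h
    · exfalso; apply hv0
      have : v ⬝ᵥ v = 0 := by rw [hvv, ← h]; ring
      exact (dotProduct_self_eq_zero).mp this
  have hndpos : 0 < vnorm d := by
    rcases hnd.lt_or_eq with h | h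
    · exact h
    · exfalso; apply hd0
      have : d ⬝ᵥ d = 0 := by rw [hdd, ← h]; ring
      exact (dotProduct_self_eq_zero).mp this
  set α : ℝ := vnorm d / vnorm v with hα
  have hαpos : 0 < α := div_pos hndpos hnvpos
  have hαnv : α * vnorm v = vnorm d := div_mul_cancel₀ _ (ne_of_gt hnvpos)
  have h1 := hA (α • v - d)
  have h2 := hB (α • v + d)
  simp only [Matrix.mulVec_add, Matrix.mulVec_sub, Matrix.mulVec_smul, dotProduct_add,
    add_dotProduct, dotProduct_sub, sub_dotProduct, smul_dotProduct, dotProduct_smul,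
    smul_eq_mul] at h1 h2
  rw [hsym d v] at h1 h2
  rw [hvv, hdd, dotProduct_comm d v] at h2
  have h5 : vnorm d ^ 2 = α * (vnorm v * vnorm d) := by rw [← hαnv]; ring
  have h6 : α * (α * vnorm v ^ 2) = vnorm d ^ 2 := by rw [← hαnv]; ring
  nlinarith [h1, h2, hαpos, hαnv, h5, h6, mul_pos hαpos hαpos]
end

section
/- Let H ∈ ℝ^{m×m} be symmetric positive semidefinite and let v, d ∈ ℝ^m. Then v^T H d ≥ (1/2)(v^T d − ‖v‖‖d‖) ‖H‖. -/
open Matrix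
open scoped RealInnerProductSpace

lemma quad_le_opNorm {m : ℕ} (H : Matrix (Fin m) (Fin m) ℝ) (x : Fin m → ℝ) :
    x ⬝ᵥ H.mulVec x ≤ opNorm H * (x ⬝ᵥ x) := by
  set x' : EuclideanSpace ℝ (Fin m) := (WithLp.equiv 2 _).symm x with hx'
  have h1 : x ⬝ᵥ H.mulVec x = ⟪x', toEuclideanCLM (𝕜 := ℝ) H x'⟫ := by
    rw [hx', WithLp.equiv_symm_apply, toEuclideanCLM_toLp]
    simp [PiLp.inner_apply, dotProduct, mulVec, PiLp.toLp_apply, mul_comm]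
  have h2 : x ⬝ᵥ x = ‖x'‖ ^ 2 := by
    rw [← real_inner_self_eq_norm_sq]
    simp only [hx', WithLp.equiv_symm_apply, PiLp.inner_apply, dotProduct, PiLp.toLp_apply]
    simp [sq]
  rw [h1, h2]
  calc ⟪x', toEuclideanCLM (𝕜 := ℝ) H x'⟫ ≤ ‖x'‖ * ‖toEuclideanCLM (𝕜 := ℝ) H x'‖ :=
        real_inner_le_norm _ _
    _ ≤ ‖x'‖ * (‖toEuclideanCLM (𝕜 := ℝ) H‖ * ‖x'‖) := by
        gcongr; exact (toEuclideanCLM (𝕜 := ℝ) H).le_opNorm x'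
    _ = opNorm H * ‖x'‖ ^ 2 := by rw [opNorm]; ring

theorem stmt_12 (m : ℕ) (H : Matrix (Fin m) (Fin m) ℝ) (hH : H.PosSemidef)
    (v d : Fin m → ℝ) :
    (1 / 2) * (v ⬝ᵥ d - vnorm v * vnorm d) * opNorm H ≤ v ⬝ᵥ H.mulVec d := by
  have hN : 0 ≤ opNorm H := norm_nonneg _
  have hq : ∀ x : Fin m → ℝ, 0 ≤ x ⬝ᵥ H.mulVec x := by
    intro x
    simpa using hH.dotProduct_mulVec_nonneg x
  have hsymH : Hᵀ = H := by
    have := hH.1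
    simpa [Matrix.IsHermitian, conjTranspose_eq_transpose_of_trivial] using this
  have hsym : ∀ x y : Fin m → ℝ, x ⬝ᵥ H.mulVec y = y ⬝ᵥ H.mulVec x := by
    intro x y
    rw [Matrix.dotProduct_mulVec, ← Matrix.mulVec_transpose, hsymH, dotProduct_comm]
  have hself : ∀ x : Fin m → ℝ, 0 ≤ x ⬝ᵥ x := fun x =>
    Finset.sum_nonneg fun i _ => mul_self_nonneg _
  have hα2 : vnorm v ^ 2 = v ⬝ᵥ v := Real.sq_sqrt (hself v)
  have hβ2 : vnorm d ^ 2 = d ⬝ᵥ d := Real.sq_sqrt (hself d)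
  have hα0 : 0 ≤ vnorm v := Real.sqrt_nonneg _
  have hβ0 : 0 ≤ vnorm d := Real.sqrt_nonneg _
  set α := vnorm v
  set β := vnorm d
  by_cases h0 : α * β = 0
  · -- one of the vectors is zero
    have hvd : v ⬝ᵥ d = 0 ∧ v ⬝ᵥ H.mulVec d = 0 := by
      rcases mul_eq_zero.mp h0 with h | h
      · have hv : v = 0 := by
          funext i
          simp only [Pi.zero_apply]
          have hsum : v ⬝ᵥ v = 0 := by rw [← hα2, h]; ring
          have hle : v i * v i ≤ v ⬝ᵥ v :=
            Finset.single_le_sum (f := fun j => v j * v j)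
              (fun j _ => mul_self_nonneg _) (Finset.mem_univ i)
          nlinarith [mul_self_nonneg (v i)]
        simp [hv]
      · have hd : d = 0 := by
          funext i
          simp only [Pi.zero_apply]
          have hsum : d ⬝ᵥ d = 0 := by rw [← hβ2, h]; ring
          have hle : d i * d i ≤ d ⬝ᵥ d :=
            Finset.single_le_sum (f := fun j => d j * d j)
              (fun j _ => mul_self_nonneg _) (Finset.mem_univ i)
          nlinarith [mul_self_nonneg (d i)]
        simp [hd]
    rw [hvd.1, hvd.2, h0]
    simp
  · have hαβ : 0 < α * β := lt_of_le_of_ne (mul_nonneg hα0 hβ0) (Ne.symm h0)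
    have hqz := hq (β • v + α • d)
    have hubw := quad_le_opNorm H (β • v - α • d)
    have hS : d ⬝ᵥ H.mulVec v = v ⬝ᵥ H.mulVec d := hsym d v
    have hc : d ⬝ᵥ v = v ⬝ᵥ d := dotProduct_comm d v
    simp only [add_dotProduct, dotProduct_add, sub_dotProduct, dotProduct_sub,
      mulVec_add, mulVec_sub, mulVec_smul, smul_dotProduct, dotProduct_smul,
      smul_eq_mul] at hqz hubw
    rw [hS, hc, ← hα2, ← hβ2] at hubw
    rw [hS] at hqz
    have key : 2 * opNorm H * (α * β) * (v ⬝ᵥ d - α * β) ≤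
        4 * (α * β) * (v ⬝ᵥ H.mulVec d) := by nlinarith [hqz, hubw]
    nlinarith [key, hαβ]
end
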